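/- Let Z be a random variable on a discrete probability space with finite range 𝒵, let ρ be a random state on a finite-dimensional complex Hilbert space defined on the same probability space, and let F be a two-universal random function on 𝒵 with finite range 𝒮, chosen independently of the pair (Z, ρ). Writing ρ_z := [ρ | Z = z], the following identity holds: E_F[ Σ_{s∈𝒮} Pr[F(Z)=s]² [ρ | F(Z)=s]² ] = Σ_{z,z'∈𝒵} P_Z(z) P_Z(z') ρ_z ρ_{z'} Pr[F(z) = F(z')], where both sides are operators (terms with zero probability are taken to be 0). -/

import Mathlib

open Matrix
open scoped Kronecker ComplexOrder

noncomputable section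

/-- A density operator: positive semidefinite with trace one. -/
def IsDensityOp {d : Type*} [Fintype d] [DecidableEq d] (ρ : Matrix d d ℂ) : Prop :=
  ρ.PosSemidef ∧ ρ.trace = 1

/-- The operator absolute value `|A| = (A Aᴴ)^(1/2)`. -/
noncomputable def matAbs {d : Type*} [Fintype d] [DecidableEq d] (A : Matrix d d ℂ) :
    Matrix d d ℂ :=
  (Matrix.posSemidef_self_mul_conjTranspose A).1.eigenvectorUnitary.1 *
    diagonal ((↑) ∘ (√·) ∘ (Matrix.posSemidef_self_mul_conjTranspose A).1.eigenvalues) *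
    (star (Matrix.posSemidef_self_mul_conjTranspose A).1.eigenvectorUnitary : Matrix d d ℂ)

/-- Trace distance `δ(ρ,σ) = (1/2) tr|ρ-σ|`. -/
noncomputable def traceDist {d : Type*} [Fintype d] [DecidableEq d]
    (ρ σ : Matrix d d ℂ) : ℝ :=
  (1 / 2) * (matAbs (ρ - σ)).trace.re

/-- Squared Hilbert-Schmidt distance `Δ(ρ,σ) = tr((ρ-σ)²)`. -/
noncomputable def hsDistSq {d : Type*} [Fintype d] [DecidableEq d]
    (ρ σ : Matrix d d ℂ) : ℝ :=
  ((ρ - σ) * (ρ - σ)).trace.re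

/-- Expectation of a random state. -/
noncomputable def expState {Ω d : Type*} [Fintype d]
    (P : Ω → ℝ) (ρ : Ω → Matrix d d ℂ) : Matrix d d ℂ :=
  ∑' ω, P ω • ρ ω

/-- Probability of an event. -/
noncomputable def prEvent {Ω : Type*} (P : Ω → ℝ) (E : Set Ω) : ℝ :=
  ∑' ω, E.indicator P ω

/-- Conditional expectation `[ρ | E]` of a random state given an event. -/
noncomputable def condExpState {Ω d : Type*} [Fintype d]
    (P : Ω → ℝ) (ρ : Ω → Matrix d d ℂ) (E : Set Ω) : Matrix d d ℂ :=
  (prEvent P E)⁻¹ • ∑' ω, E.indicator (fun ω => P ω • ρ ω) ω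

/-- The classical state `|x⟩⟨x|`. -/
noncomputable def classicalState {𝒳 : Type*} [Fintype 𝒳] [DecidableEq 𝒳] (x : 𝒳) :
    Matrix 𝒳 𝒳 ℂ :=
  Matrix.single x x 1

/-- The fully mixed state on `𝒳`. -/
noncomputable def uniformState (𝒳 : Type*) [Fintype 𝒳] [DecidableEq 𝒳] : Matrix 𝒳 𝒳 ℂ :=
  (Fintype.card 𝒳 : ℂ)⁻¹ • (1 : Matrix 𝒳 𝒳 ℂ)

/-- Non-uniformity `d(X|ρ) = δ([{X} ⊗ ρ], [{U}] ⊗ [ρ])`. -/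
noncomputable def nonUnif {Ω 𝒳 d : Type*} [Fintype 𝒳] [DecidableEq 𝒳]
    [Fintype d] [DecidableEq d]
    (P : Ω → ℝ) (X : Ω → 𝒳) (ρ : Ω → Matrix d d ℂ) : ℝ :=
  traceDist (expState P (fun ω => classicalState (X ω) ⊗ₖ ρ ω))
    (uniformState 𝒳 ⊗ₖ expState P ρ)

/-- `D(X|ρ) = Δ([{X} ⊗ ρ], [{U}] ⊗ [ρ])`. -/
noncomputable def DNonUnif {Ω 𝒳 d : Type*} [Fintype 𝒳] [DecidableEq 𝒳]
    [Fintype d] [DecidableEq d]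
    (P : Ω → ℝ) (X : Ω → 𝒳) (ρ : Ω → Matrix d d ℂ) : ℝ :=
  hsDistSq (expState P (fun ω => classicalState (X ω) ⊗ₖ ρ ω))
    (uniformState 𝒳 ⊗ₖ expState P ρ)

/-- Rényi entropy of order 0: `log₂ rank ρ`. -/
noncomputable def renyiS0 {d : Type*} [Fintype d] [DecidableEq d] (ρ : Matrix d d ℂ) : ℝ :=
  Real.logb 2 (ρ.rank)

/-- Rényi entropy of order 2: `-log₂ tr(ρ²)`. -/
noncomputable def renyiS2 {d : Type*} [Fintype d] [DecidableEq d] (ρ : Matrix d d ℂ) : ℝ :=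
  -Real.logb 2 ((ρ * ρ).trace.re)

/-- Maximal eigenvalue of a Hermitian matrix. -/
noncomputable def lambdaMax {d : Type*} [Fintype d] [DecidableEq d] (ρ : Matrix d d ℂ) : ℝ :=
  if h : ρ.IsHermitian then ⨆ i, h.eigenvalues i else 0

/-- Von Neumann entropy `S(ρ) = -tr(ρ log₂ ρ)` (in bits). -/
noncomputable def vnEntropy {d : Type*} [Fintype d] [DecidableEq d] (ρ : Matrix d d ℂ) : ℝ :=
  if h : ρ.IsHermitian then -∑ i, h.eigenvalues i * Real.logb 2 (h.eigenvalues i) else 0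

/-- Smooth Rényi entropy of order 0. -/
noncomputable def smoothS0 {d : Type*} [Fintype d] [DecidableEq d]
    (ε : ℝ) (ρ : Matrix d d ℂ) : ℝ :=
  sInf {x : ℝ | ∃ σ : Matrix d d ℂ,
    IsDensityOp σ ∧ traceDist ρ σ ≤ ε ∧ x = Real.logb 2 (σ.rank)}

/-- Smooth Rényi entropy of order ∞. -/
noncomputable def smoothSinf {d : Type*} [Fintype d] [DecidableEq d]
    (ε : ℝ) (ρ : Matrix d d ℂ) : ℝ :=
  sSup {x : ℝ | ∃ σ : Matrix d d ℂ,
    IsDensityOp σ ∧ traceDist ρ σ ≤ ε ∧ x = -Real.logb 2 (lambdaMax σ)}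



lemma densityOp_entry_bound {d : Type*} [Fintype d] [DecidableEq d] {A : Matrix d d ℂ}
    (h : IsDensityOp A) (i j : d) : ‖A i j‖ ≤ 1 := by
  have hdiag : ∀ k, 0 ≤ A k k := by
    intro k
    have := h.1.dotProduct_mulVec_nonneg (Pi.single k 1)
    simpa [Matrix.mulVec, dotProduct, Pi.single_apply] using this
  have hdiag_re : ∀ k, 0 ≤ (A k k).re ∧ (A k k).im = 0 := by
    intro k
    have := hdiag k
    rw [Complex.le_def] at this
    simp at this
    exact ⟨this.1, this.2.symm⟩
  have htr : ∑ k, (A k k).re = 1 := by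
    have := h.2
    unfold Matrix.trace Matrix.diag at this
    have := congrArg Complex.re this
    simpa using this
  have hdle : ∀ k, (A k k).re ≤ 1 := by
    intro k
    rw [← htr]
    exact Finset.single_le_sum (fun l _ => (hdiag_re l).1) (Finset.mem_univ k)
  by_cases hij : i = j
  · subst hij
    have h1 := (hdiag_re i).1
    have h2 := (hdiag_re i).2
    have hre : A i i = ((A i i).re : ℂ) := Complex.ext rfl (by simp [h2])
    rw [hre, Complex.norm_real, Real.norm_eq_abs, abs_of_nonneg h1]
    exact hdle i
  · set c : ℂ := -(starRingEnd ℂ (A i j)) with hc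
    set n : ℝ := ‖A i j‖ with hn
    have key : A i j * starRingEnd ℂ (A i j) = ((n^2 : ℝ) : ℂ) := by
      rw [Complex.mul_conj]
      norm_cast
      rw [Complex.normSq_eq_norm_sq, hn]
    have hform := h.1.dotProduct_mulVec_nonneg (Pi.single i 1 + Pi.single j c)
    have hexp : dotProduct (star ((Pi.single i 1 : d → ℂ) + Pi.single j c))
        (A *ᵥ ((Pi.single i 1 : d → ℂ) + Pi.single j c))
        = A i i + c * A i j + (starRingEnd ℂ c) * A j i + (starRingEnd ℂ c) * c * A j j := by
      have hstar : star ((Pi.single i 1 : d → ℂ) + Pi.single j c)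
          = (Pi.single i 1 : d → ℂ) + Pi.single j (starRingEnd ℂ c) := by
        funext k
        by_cases h1 : k = i <;> by_cases h2 : k = j <;>
          simp_all [Pi.single_apply, hij, Ne.symm hij]
      rw [Matrix.mulVec_add, hstar, Matrix.mulVec_single, Matrix.mulVec_single]
      rw [add_dotProduct, single_dotProduct, single_dotProduct]
      simp [Pi.add_apply]
      ring
    rw [hexp] at hform
    have hji : A j i = starRingEnd ℂ (A i j) := by
      have := h.1.1
      have := congrFun (congrFun this j) i
      simpa [Matrix.conjTranspose_apply] using this.symm
    have hre2 : A i i + c * A i j + (starRingEnd ℂ c) * A j i + (starRingEnd ℂ c) * c * A j j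
        = A i i + ((-(n^2) : ℝ) : ℂ) + ((-(n^2) : ℝ) : ℂ) + ((n^2 : ℝ) : ℂ) * A j j := by
      rw [hji, hc]
      have e1 : -(starRingEnd ℂ (A i j)) * A i j = ((-(n^2) : ℝ) : ℂ) := by
        rw [neg_mul, mul_comm, key]; push_cast; ring
      have e2 : (starRingEnd ℂ (-(starRingEnd ℂ (A i j)))) * (starRingEnd ℂ (A i j))
          = ((-(n^2) : ℝ) : ℂ) := by
        simp only [map_neg, Complex.conj_conj, neg_mul]
        rw [key]; push_cast; ring
      have e3 : (starRingEnd ℂ (-(starRingEnd ℂ (A i j)))) * (-(starRingEnd ℂ (A i j)))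
          = ((n^2 : ℝ) : ℂ) := by
        simp only [map_neg, Complex.conj_conj, neg_mul, mul_neg, neg_neg]
        rw [key]
      rw [e1, e2, e3]
    rw [hre2, Complex.le_def] at hform
    have hform_re : 0 ≤ (A i i).re - 2 * n^2 + n^2 * (A j j).re := by
      have := hform.1
      simp only [Complex.add_re, Complex.mul_re, Complex.ofReal_re, Complex.ofReal_im,
        Complex.zero_re] at this
      linarith
    nlinarith [hdle i, hdle j, (hdiag_re i).1, (hdiag_re j).1, norm_nonneg (A i j)]

/-- The operator identity from the proof of Lemma 8:
`E_F[Σ_s Pr[F(Z)=s]² [ρ|F(Z)=s]²] = Σ_{z,z'} P_Z(z) P_Z(z') ρ_z ρ_{z'} Pr[F(z)=F(z')]`. -/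
theorem stmt_10 {Ω Ω' 𝒵 𝒮 d : Type*} [Countable Ω] [Countable Ω']
    [Fintype 𝒵] [DecidableEq 𝒵] [Fintype 𝒮] [DecidableEq 𝒮]
    [Fintype d] [DecidableEq d]
    (P : Ω → ℝ) (hP : ∀ ω, 0 ≤ P ω) (hP1 : ∑' ω, P ω = 1)
    (Q : Ω' → ℝ) (hQ : ∀ ω', 0 ≤ Q ω') (hQ1 : ∑' ω', Q ω' = 1)
    (Z : Ω → 𝒵) (ρ : Ω → Matrix d d ℂ) (hρ : ∀ ω, IsDensityOp (ρ ω))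
    (F : Ω' → 𝒵 → 𝒮)
    (hF : ∀ z z' : 𝒵, z ≠ z' →
      prEvent Q {ω' | F ω' z = F ω' z'} ≤ 1 / (Fintype.card 𝒮 : ℝ)) :
    (∑' ω', Q ω' • ∑ t : 𝒮, (prEvent P {ω | F ω' (Z ω) = t}) ^ 2 •
        (condExpState P ρ {ω | F ω' (Z ω) = t} * condExpState P ρ {ω | F ω' (Z ω) = t}))
      = ∑ z : 𝒵, ∑ z' : 𝒵,
          (prEvent P {ω | Z ω = z} * prEvent P {ω | Z ω = z'} *
              prEvent Q {ω' | F ω' z = F ω' z'}) •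
            (condExpState P ρ {ω | Z ω = z} * condExpState P ρ {ω | Z ω = z'}) := by
  classical
  have hPsum : Summable P := by
    by_contra hcon
    rw [tsum_eq_zero_of_not_summable hcon] at hP1; norm_num at hP1
  have hQsum : Summable Q := by
    by_contra hcon
    rw [tsum_eq_zero_of_not_summable hcon] at hQ1; norm_num at hQ1
  have hfsum : Summable (fun ω => P ω • ρ ω) := by
    apply Pi.summable.mpr; intro i; apply Pi.summable.mpr; intro j
    apply Summable.of_norm_bounded hPsum
    intro ω
    show ‖P ω • ρ ω i j‖ ≤ P ω
    rw [norm_smul, Real.norm_eq_abs, abs_of_nonneg (hP ω)]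
    calc P ω * ‖ρ ω i j‖ ≤ P ω * 1 :=
          mul_le_mul_of_nonneg_left (densityOp_entry_bound (hρ ω) i j) (hP ω)
      _ = P ω := mul_one _
  set g : Set Ω → Matrix d d ℂ := fun E => ∑' ω, E.indicator (fun ω => P ω • ρ ω) ω with hg
  have key : ∀ E : Set Ω, prEvent P E • condExpState P ρ E = g E := by
    intro E
    by_cases h : prEvent P E = 0
    · have hz : ∀ ω, E.indicator (fun ω => P ω • ρ ω) ω = 0 := by
        intro ω
        have hge : 0 ≤ E.indicator P ω := Set.indicator_apply_nonneg (fun _ => hP ω)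
        have hle : E.indicator P ω ≤ 0 := by
          have h2 := Summable.le_tsum (hPsum.indicator E) ω
            (fun b _ => Set.indicator_apply_nonneg (fun _ => hP b))
          rw [show (∑' ω, E.indicator P ω) = prEvent P E from rfl, h] at h2
          exact h2
        have h0 : E.indicator P ω = 0 := le_antisymm hle hge
        by_cases hm : ω ∈ E
        · rw [Set.indicator_of_mem hm] at h0 ⊢
          rw [h0, zero_smul]
        · rw [Set.indicator_of_notMem hm]
      rw [h, zero_smul]
      have hz2 : g E = 0 := by
        rw [hg]
        simp only
        rw [tsum_congr hz, tsum_zero]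
      exact hz2.symm
    · show prEvent P E • ((prEvent P E)⁻¹ • _) = _
      rw [smul_smul, mul_inv_cancel₀ h, one_smul]
  have hsplit : ∀ (ω' : Ω') (t : 𝒮),
      g {ω | F ω' (Z ω) = t} = ∑ z : 𝒵, if F ω' z = t then g {ω | Z ω = z} else 0 := by
    intro ω' t
    have hpt : ∀ ω, ({ω | F ω' (Z ω) = t}).indicator (fun ω => P ω • ρ ω) ω
        = ∑ z : 𝒵, if F ω' z = t
            then ({ω'' | Z ω'' = z}).indicator (fun ω => P ω • ρ ω) ω else 0 := by
      intro ω
      have step : ∀ z : 𝒵,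
          (if F ω' z = t then ({ω'' | Z ω'' = z}).indicator (fun ω => P ω • ρ ω) ω else 0)
          = if Z ω = z then (if F ω' z = t then P ω • ρ ω else 0) else 0 := by
        intro z
        by_cases h1 : F ω' z = t <;> by_cases h2 : Z ω = z <;>
          simp [Set.indicator, h1, h2]
      rw [Finset.sum_congr rfl (fun z _ => step z), Finset.sum_ite_eq]
      simp [Set.indicator]
    have hsummand : ∀ z ∈ (Finset.univ : Finset 𝒵), Summable
        (fun ω => if F ω' z = t
          then ({ω'' | Z ω'' = z}).indicator (fun ω => P ω • ρ ω) ω else 0) := by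
      intro z _
      by_cases h1 : F ω' z = t
      · simpa [h1] using hfsum.indicator {ω'' | Z ω'' = z}
      · simpa [h1] using summable_zero
    rw [hg]
    simp only
    rw [tsum_congr hpt, Summable.tsum_finsetSum hsummand]
    refine Finset.sum_congr rfl fun z _ => ?_
    by_cases h1 : F ω' z = t <;> simp [h1]
  have hw : ∀ ω' : Ω', (∑ t : 𝒮, (prEvent P {ω | F ω' (Z ω) = t}) ^ 2 •
        (condExpState P ρ {ω | F ω' (Z ω) = t} * condExpState P ρ {ω | F ω' (Z ω) = t}))
      = ∑ z : 𝒵, ∑ z' : 𝒵,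
          if F ω' z = F ω' z' then g {ω | Z ω = z} * g {ω | Z ω = z'} else 0 := by
    intro ω'
    have h1 : ∀ t : 𝒮, (prEvent P {ω | F ω' (Z ω) = t}) ^ 2 •
        (condExpState P ρ {ω | F ω' (Z ω) = t} * condExpState P ρ {ω | F ω' (Z ω) = t})
        = g {ω | F ω' (Z ω) = t} * g {ω | F ω' (Z ω) = t} := by
      intro t
      rw [← key, smul_mul_smul_comm, ← sq, ← sq]
    rw [Finset.sum_congr rfl (fun t _ => h1 t)]
    rw [Finset.sum_congr rfl (fun t _ => by rw [hsplit ω' t])]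
    rw [Finset.sum_congr rfl (fun t (_ : t ∈ Finset.univ) =>
      Finset.sum_mul_sum (Finset.univ : Finset 𝒵) (Finset.univ : Finset 𝒵)
        (fun z => if F ω' z = t then g {ω | Z ω = z} else 0)
        (fun z' => if F ω' z' = t then g {ω | Z ω = z'} else 0))]
    rw [Finset.sum_comm]
    refine Finset.sum_congr rfl fun z _ => ?_
    rw [Finset.sum_comm]
    refine Finset.sum_congr rfl fun z' _ => ?_
    have step : ∀ t : 𝒮,
        (if F ω' z = t then g {ω | Z ω = z} else 0) *
          (if F ω' z' = t then g {ω | Z ω = z'} else 0)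
        = if F ω' z = t
            then (if F ω' z' = t then g {ω | Z ω = z} * g {ω | Z ω = z'} else 0) else 0 := by
      intro t
      by_cases ha : F ω' z = t <;> by_cases hb : F ω' z' = t <;> simp [ha, hb]
    rw [Finset.sum_congr rfl (fun t _ => step t), Finset.sum_ite_eq]
    simp only [Finset.mem_univ, if_true]
    exact if_congr eq_comm rfl rfl
  have hsum2 : ∀ (z z' : 𝒵), Summable (fun ω' : Ω' =>
      ({ω'' : Ω' | F ω'' z = F ω'' z'}).indicator Q ω' •
        (g {ω | Z ω = z} * g {ω | Z ω = z'})) :=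
    fun z z' => (hQsum.indicator _).smul_const _
  calc (∑' ω', Q ω' • ∑ t : 𝒮, (prEvent P {ω | F ω' (Z ω) = t}) ^ 2 •
        (condExpState P ρ {ω | F ω' (Z ω) = t} * condExpState P ρ {ω | F ω' (Z ω) = t}))
      = ∑' ω', ∑ z : 𝒵, ∑ z' : 𝒵,
          ({ω'' : Ω' | F ω'' z = F ω'' z'}).indicator Q ω' •
            (g {ω | Z ω = z} * g {ω | Z ω = z'}) := by
        refine tsum_congr fun ω' => ?_
        rw [hw ω', Finset.smul_sum]
        refine Finset.sum_congr rfl fun z _ => ?_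
        rw [Finset.smul_sum]
        refine Finset.sum_congr rfl fun z' _ => ?_
        by_cases hzz : F ω' z = F ω' z'
        · rw [if_pos hzz,
            Set.indicator_of_mem (show ω' ∈ {ω'' : Ω' | F ω'' z = F ω'' z'} from hzz) Q]
        · rw [if_neg hzz,
            Set.indicator_of_notMem (show ω' ∉ {ω'' : Ω' | F ω'' z = F ω'' z'} from hzz) Q,
            smul_zero, zero_smul]
    _ = ∑ z : 𝒵, ∑ z' : 𝒵, (prEvent Q {ω' | F ω' z = F ω' z'}) •
          (g {ω | Z ω = z} * g {ω | Z ω = z'}) := by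
        rw [Summable.tsum_finsetSum (fun z _ => summable_sum (fun z' _ => hsum2 z z'))]
        refine Finset.sum_congr rfl fun z _ => ?_
        rw [Summable.tsum_finsetSum (fun z' _ => hsum2 z z')]
        refine Finset.sum_congr rfl fun z' _ => ?_
        exact Summable.tsum_smul_const (hQsum.indicator _) _
    _ = ∑ z : 𝒵, ∑ z' : 𝒵,
          (prEvent P {ω | Z ω = z} * prEvent P {ω | Z ω = z'} *
              prEvent Q {ω' | F ω' z = F ω' z'}) •
            (condExpState P ρ {ω | Z ω = z} * condExpState P ρ {ω | Z ω = z'}) := by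
        refine Finset.sum_congr rfl fun z _ => Finset.sum_congr rfl fun z' _ => ?_
        rw [← key, ← key, smul_mul_smul_comm, smul_smul]
        congr 1
        ring


end
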